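/- Let F : ℝ^d × ℝ^k → ℝ be such that for each p₁ the map r ↦ F(r, p₁) is differentiable and μ-strongly convex (μ > 0) on a convex set S(p₁) ⊆ ℝ^d, and such that for the fixed point r' below the map p ↦ ∇_r F(r', p) is continuously differentiable on the segment joining p₁ and p₁'. Let r = r*(p₁) minimize F(·, p₁) over S(p₁) and r' = r*(p₁') minimize F(·, p₁') over S(p₁'), and assume mutual feasibility: r' ∈ S(p₁) and r ∈ S(p₁'). Set Δ := p₁' − p₁ and Δr := r*(p₁') − r*(p₁). Then ‖Δr‖ ≤ (M/μ)·‖Δ‖, where M := sup_{t∈[0,1]} ‖∇²_{r,p₁} F(r*(p₁'), p₁^t)‖ and p₁^t := t·p₁' + (1−t)·p₁ (Lemma 'Behavior of r*(·) under changes in p₁'). -/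

import Mathlib

open scoped RealInnerProductSpace

/-- First-order optimality condition on a convex set. -/
lemma foc_aux {E : Type*} [NormedAddCommGroup E] [InnerProductSpace ℝ E] [CompleteSpace E]
    {f : E → ℝ} {S : Set E} (hconv : Convex ℝ S) {x y : E} (hx : x ∈ S) (hy : y ∈ S)
    (hmin : IsMinOn f S x) (hdf : DifferentiableAt ℝ f x) :
    0 ≤ ⟪gradient f x, y - x⟫ := by
  have hcone : y - x ∈ posTangentConeAt S x :=
    sub_mem_posTangentConeAt_of_segment_subset (hconv.segment_subset hx hy)
  have hfd : HasFDerivAt f ((InnerProductSpace.toDualMap ℝ E (gradient f x) : E →L[ℝ] ℝ)) x :=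
    hasGradientAt_iff_hasFDerivAt.mp hdf.hasGradientAt
  have hloc : IsLocalMinOn f S x := hmin.localize
  have h := hloc.hasFDerivWithinAt_nonneg hfd.hasFDerivWithinAt hcone
  simpa [InnerProductSpace.toDualMap_apply_apply] using h

theorem rstar_stability_under_p1_changes
    {d k : ℕ}
    {F : EuclideanSpace ℝ (Fin d) → EuclideanSpace ℝ (Fin k) → ℝ}
    {S : EuclideanSpace ℝ (Fin k) → Set (EuclideanSpace ℝ (Fin d))}
    {μ : ℝ} (hμ : 0 < μ)
    (hSconv : ∀ p, Convex ℝ (S p))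
    (hdiff : ∀ p, ∀ x ∈ S p, DifferentiableAt ℝ (fun s => F s p) x)
    (hsc : ∀ p, ∀ x ∈ S p, ∀ y ∈ S p,
      F x p + ⟪gradient (fun s => F s p) x, y - x⟫ + μ / 2 * ‖y - x‖ ^ 2 ≤ F y p)
    {p₁ p₁' : EuclideanSpace ℝ (Fin k)}
    {r r' : EuclideanSpace ℝ (Fin d)}
    (hr : r ∈ S p₁) (hmin : IsMinOn (fun s => F s p₁) (S p₁) r)
    (hr' : r' ∈ S p₁') (hmin' : IsMinOn (fun s => F s p₁') (S p₁') r')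
    (hfeas : r' ∈ S p₁) (hfeas' : r ∈ S p₁')
    (hG : ∀ x ∈ segment ℝ p₁ p₁',
      DifferentiableAt ℝ (fun p => gradient (fun s => F s p) r') x)
    (hGcont : ContinuousOn
      (fun x => fderiv ℝ (fun p => gradient (fun s => F s p) r') x) (segment ℝ p₁ p₁')) :
    ‖r' - r‖ ≤
      ((⨆ t : Set.Icc (0 : ℝ) 1,
          ‖fderiv ℝ (fun p => gradient (fun s => F s p) r')
            ((t : ℝ) • p₁' + (1 - (t : ℝ)) • p₁)‖) / μ) * ‖p₁' - p₁‖ := by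
  classical
  set G : EuclideanSpace ℝ (Fin k) → EuclideanSpace ℝ (Fin d) :=
    fun p => gradient (fun s => F s p) r' with hGdef
  set M : ℝ := ⨆ t : Set.Icc (0 : ℝ) 1,
      ‖fderiv ℝ (fun p => gradient (fun s => F s p) r')
        ((t : ℝ) • p₁' + (1 - (t : ℝ)) • p₁)‖ with hMdef
  haveI : Nonempty (Set.Icc (0 : ℝ) 1) :=
    (Set.nonempty_Icc.mpr zero_le_one).to_subtype
  -- the parametrization of the segment
  have hmapsTo : ∀ t : ℝ, t ∈ Set.Icc (0 : ℝ) 1 →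
      (t : ℝ) • p₁' + (1 - t) • p₁ ∈ segment ℝ p₁ p₁' := by
    intro t ht
    exact ⟨1 - t, t, by linarith [ht.2], ht.1, by ring, by rw [add_comm]⟩
  -- boundedness of the sup
  have hcont : ContinuousOn
      (fun t : ℝ => ‖fderiv ℝ (fun p => gradient (fun s => F s p) r')
        ((t : ℝ) • p₁' + (1 - t) • p₁)‖) (Set.Icc 0 1) := by
    apply ContinuousOn.norm
    apply hGcont.comp
    · exact (Continuous.add (continuous_id.smul continuous_const)
        ((continuous_const.sub continuous_id).smul continuous_const)).continuousOn
    · exact hmapsTo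
  obtain ⟨C, hC⟩ := isCompact_Icc.exists_bound_of_continuousOn hcont
  have hbdd : BddAbove (Set.range (fun t : Set.Icc (0 : ℝ) 1 =>
      ‖fderiv ℝ (fun p => gradient (fun s => F s p) r')
        ((t : ℝ) • p₁' + (1 - (t : ℝ)) • p₁)‖)) := by
    refine ⟨C, ?_⟩
    rintro _ ⟨t, rfl⟩
    simpa using hC t t.2
  have hM0 : 0 ≤ M := le_trans (norm_nonneg _) (le_ciSup hbdd ⟨0, le_refl 0, zero_le_one⟩)
  -- bound on ‖fderiv G x‖ for x in the segment
  have hbound : ∀ x ∈ segment ℝ p₁ p₁', ‖fderiv ℝ G x‖ ≤ M := by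
    rintro x ⟨a, b, ha, hb, hab, rfl⟩
    have hb1 : b ≤ 1 := by linarith
    have hx : a • p₁ + b • p₁' = (b : ℝ) • p₁' + (1 - b) • p₁ := by
      rw [add_comm]; congr 1; rw [show a = 1 - b by linarith]
    rw [hx]
    exact le_ciSup hbdd ⟨b, hb, hb1⟩
  -- mean value inequality
  have hMVT : ‖G p₁' - G p₁‖ ≤ M * ‖p₁' - p₁‖ := by
    apply Convex.norm_image_sub_le_of_norm_hasFDerivWithin_le (𝕜 := ℝ)
      (f' := fun x => fderiv ℝ G x)
      (fun x hx => (hG x hx).hasFDerivAt.hasFDerivWithinAt) hbound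
      (convex_segment _ _) (left_mem_segment _ _ _) (right_mem_segment _ _ _)
  -- strong convexity inequalities
  have hA := hsc p₁ r hr r' hfeas
  have hB := hsc p₁ r' hfeas r hr
  -- first-order optimality
  have hfoc1 : 0 ≤ ⟪gradient (fun s => F s p₁) r, r' - r⟫ :=
    foc_aux (hSconv p₁) hr hfeas hmin (hdiff p₁ r hr)
  have hfoc2 : 0 ≤ ⟪gradient (fun s => F s p₁') r', r - r'⟫ :=
    foc_aux (hSconv p₁') hr' hfeas' hmin' (hdiff p₁' r' hr')
  have hnorm : ‖r - r'‖ = ‖r' - r‖ := norm_sub_rev _ _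
  -- key inequality: μ ‖r' - r‖² ≤ ⟪G p₁ - G p₁', r' - r⟫
  have hkey : μ * ‖r' - r‖ ^ 2 ≤ ⟪G p₁ - G p₁', r' - r⟫ := by
    have h1 : ⟪gradient (fun s => F s p₁) r', r - r'⟫
        = - ⟪gradient (fun s => F s p₁) r', r' - r⟫ := by
      rw [← inner_neg_right]; congr 1; abel
    have h2 : ⟪gradient (fun s => F s p₁') r', r - r'⟫
        = - ⟪gradient (fun s => F s p₁') r', r' - r⟫ := by
      rw [← inner_neg_right]; congr 1; abel
    have hsub : ⟪G p₁ - G p₁', r' - r⟫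
        = ⟪gradient (fun s => F s p₁) r', r' - r⟫
          - ⟪gradient (fun s => F s p₁') r', r' - r⟫ := by
      simp [hGdef, inner_sub_left]
    rw [hsub]
    rw [hnorm] at hB
    rw [h1] at hB
    rw [h2] at hfoc2
    nlinarith [hA, hB, hfoc1, hfoc2]
  -- Cauchy–Schwarz
  have hCS : ⟪G p₁ - G p₁', r' - r⟫ ≤ ‖G p₁' - G p₁‖ * ‖r' - r‖ := by
    calc ⟪G p₁ - G p₁', r' - r⟫ ≤ ‖G p₁ - G p₁'‖ * ‖r' - r‖ := real_inner_le_norm _ _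
    _ = ‖G p₁' - G p₁‖ * ‖r' - r‖ := by rw [norm_sub_rev]
  have hchain : μ * ‖r' - r‖ ^ 2 ≤ M * ‖p₁' - p₁‖ * ‖r' - r‖ :=
    le_trans (le_trans hkey hCS)
      (mul_le_mul_of_nonneg_right hMVT (norm_nonneg _))
  rcases eq_or_lt_of_le (norm_nonneg (r' - r)) with h0 | h0
  · rw [← h0]
    positivity
  · rw [div_mul_eq_mul_div, le_div_iff₀ hμ]
    nlinarith [hchain]
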